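/- Every subgroup G ≤ Homeo(ℝ) acting freely on ℝ (i.e., every non-identity element of G has no fixed point) is abelian, and moreover its action is semi-conjugate to an action by translations of ℝ. -/

import Mathlib

open Function Set Filter Topology

abbrev HomeoR : Type := ℝ ≃ₜ ℝ

instance : Group HomeoR where
  mul f g := g.trans f
  one := Homeomorph.refl ℝ
  inv := Homeomorph.symm
  mul_assoc _ _ _ := rfl
  one_mul f := by ext x; rfl
  mul_one f := by ext x; rfl
  inv_mul_cancel f := by ext x; exact f.symm_apply_apply x

@[simp] lemma HomeoR.mul_apply (f g : HomeoR) (x : ℝ) : (f * g) x = f (g x) := rfl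
@[simp] lemma HomeoR.one_apply (x : ℝ) : (1 : HomeoR) x = x := rfl
@[simp] lemma HomeoR.inv_eq_symm (f : HomeoR) : f⁻¹ = f.symm := rfl


/-- The subgroup of orientation-preserving homeomorphisms of the line,
i.e. strictly increasing ones. -/
def HomeoPlus : Subgroup HomeoR where
  carrier := {f | StrictMono (f : ℝ → ℝ)}
  one_mem' := strictMono_id
  mul_mem' hf hg := hf.comp hg
  inv_mem' := by
    intro f hf a b hab
    have h := hf.lt_iff_lt (a := f.symm a) (b := f.symm b)
    rw [f.apply_symm_apply, f.apply_symm_apply] at h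
    exact h.mp hab

/-- `G` has at most `N` fixed points: every non-identity element fixes at most `N` points. -/
def HasAtMostNFixedPoints (G : Subgroup HomeoR) (N : ℕ) : Prop :=
  ∀ g ∈ G, g ≠ 1 → ∃ S : Finset ℝ, S.card ≤ N ∧ ∀ x : ℝ, g x = x → x ∈ S

/-- A continuous non-decreasing map `ℝ → ℝ` which is proper. -/
def MonotoneProper (h : ℝ → ℝ) : Prop :=
  Continuous h ∧ Monotone h ∧ Tendsto h atTop atTop ∧ Tendsto h atBot atBot

/-- The action of `G` is (positively) semi-conjugate to the action of `F`. -/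
def IsSemiConjTo (G F : Subgroup HomeoR) : Prop :=
  ∃ (θ : G →* F) (h : ℝ → ℝ), Surjective θ ∧ MonotoneProper h ∧
    ∀ g : G, ∀ x : ℝ, (θ g : HomeoR) (h x) = h ((g : HomeoR) x)

def IsAffineHomeo (f : HomeoR) : Prop := ∃ a b : ℝ, a ≠ 0 ∧ ∀ x : ℝ, f x = a * x + b

def IsTranslationHomeo (f : HomeoR) : Prop := ∃ b : ℝ, ∀ x : ℝ, f x = x + b

def IsIsometryHomeo (f : HomeoR) : Prop :=
  ∃ b : ℝ, (∀ x : ℝ, f x = x + b) ∨ (∀ x : ℝ, f x = -x + b)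

def IsInvariantSet (G : Subgroup HomeoR) (S : Set ℝ) : Prop :=
  ∀ g ∈ G, ∀ x ∈ S, (g : HomeoR) x ∈ S

/-- A minimal invariant set: nonempty, closed, invariant, with no proper
nonempty closed invariant subset. -/
def IsMinimalInvariant (G : Subgroup HomeoR) (M : Set ℝ) : Prop :=
  M.Nonempty ∧ IsClosed M ∧ IsInvariantSet G M ∧
    ∀ S : Set ℝ, S ⊆ M → S.Nonempty → IsClosed S → IsInvariantSet G S → S = M

def orbitSet (G : Subgroup HomeoR) (x : ℝ) : Set ℝ := {y | ∃ g ∈ G, (g : HomeoR) x = y}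

lemma HomeoR.inv_apply_apply (f : HomeoR) (x : ℝ) : f⁻¹ (f x) = x := f.symm_apply_apply x
lemma HomeoR.apply_inv_apply (f : HomeoR) (x : ℝ) : f (f⁻¹ x) = x := f.apply_symm_apply x

section Holder

variable {G : Subgroup HomeoR}
  (hfree : ∀ g ∈ G, g ≠ 1 → ∀ x : ℝ, g x ≠ x)

include hfree

/-- an element of G with a fixed point is the identity -/
lemma eq_one_of_fix {g : HomeoR} (hg : g ∈ G) {x : ℝ} (hx : g x = x) : g = 1 := by
  by_contra h1
  exact hfree g hg h1 x hx

/-- sign dichotomy -/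
lemma sign_dichotomy {g : HomeoR} (hg : g ∈ G) (h1 : g ≠ 1) :
    (∀ x : ℝ, x < g x) ∨ (∀ x : ℝ, g x < x) := by
  have hne : ∀ x : ℝ, g x ≠ x := hfree g hg h1
  by_contra hc
  push_neg at hc
  obtain ⟨⟨a, ha⟩, b, hb⟩ := hc
  have ha' : g a < a := lt_of_le_of_ne ha (hne a)
  have hb' : b < g b := lt_of_le_of_ne hb (fun h => hne b h.symm)
  have hcont : Continuous (fun x : ℝ => g x - x) := g.continuous.sub continuous_id
  have h0 : (0:ℝ) ∈ Set.uIcc ((fun x : ℝ => g x - x) a) ((fun x : ℝ => g x - x) b) := by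
    simp only [Set.mem_uIcc]; left; constructor <;> [linarith; linarith]
  obtain ⟨c, _, hc0⟩ := intermediate_value_uIcc (f := fun x : ℝ => g x - x)
    hcont.continuousOn h0
  exact hne c (by linarith [sub_eq_zero.mp hc0] <;> skip)

end Holder

section Part2
variable {G : Subgroup HomeoR}
  (hfree : ∀ g ∈ G, g ≠ 1 → ∀ x : ℝ, g x ≠ x)
include hfree

/-- every element of G is strictly increasing -/
lemma mono_of_mem {g : HomeoR} (hg : g ∈ G) : StrictMono (g : ℝ → ℝ) := by
  rcases g.continuous.strictMono_of_inj g.injective with h | h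
  · exact h
  · -- strictly decreasing homeo has a fixed point, so g = 1, contradiction
    exfalso
    have h1 : g ≠ 1 := by
      intro he
      have := h (show (0:ℝ) < 1 by norm_num)
      rw [he] at this
      simp only [HomeoR.one_apply] at this
      norm_num at this
    rcases sign_dichotomy hfree hg h1 with hs | hs
    · -- x < g x for all x; but g decreasing: at large x contradiction
      -- take x = g 0: g 0 < g (g 0); if 0 < g 0 then g (g 0) < g 0 anti. 
      have h0 : (0:ℝ) < g 0 := hs 0
      have := h h0
      exact absurd (hs (g 0)) (not_lt.mpr this.le)
    · have h0 : g 0 < 0 := hs 0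
      have := h h0
      exact absurd (hs (g 0)) (not_lt.mpr this.le)

/-- pointwise comparison from comparison at one point -/
lemma ptwise {u v : HomeoR} (hu : u ∈ G) (hv : v ∈ G) {a : ℝ} (hle : u a ≤ v a) :
    ∀ x, u x ≤ v x := by
  intro x
  set w : HomeoR := v⁻¹ * u with hw
  have hwG : w ∈ G := G.mul_mem (G.inv_mem hv) hu
  by_cases h1 : w = 1
  · have : u = v := by
      have : v * w = v * 1 := by rw [h1]
      rwa [hw, mul_inv_cancel_left, mul_one] at this
    rw [this]
  · have hwa : w a ≤ a := by
      have : v⁻¹ (u a) ≤ v⁻¹ (v a) := (mono_of_mem hfree (G.inv_mem hv)).monotone hle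
      simpa [hw] using this
    rcases sign_dichotomy hfree hwG h1 with hs | hs
    · exact absurd (hs a) (not_lt.mpr hwa)
    · have : w x ≤ x := (hs x).le
      have h2 : v (w x) ≤ v x := (mono_of_mem hfree hv).monotone this
      have : v (w x) = u x := by
        simp [hw]
      linarith [h2, this.symm.le]

lemma ptwise_lt {u v : HomeoR} (hu : u ∈ G) (hv : v ∈ G) {a : ℝ} (hlt : u a < v a) :
    ∀ x, u x < v x := by
  intro x
  refine lt_of_le_of_ne (ptwise hfree hu hv hlt.le x) (fun he => ?_)
  have : (v⁻¹ * u) x = x := by simp [he]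
  have h1 : v⁻¹ * u = 1 := eq_one_of_fix hfree (G.mul_mem (G.inv_mem hv) hu) this
  have : u = v := by
    have : v * (v⁻¹ * u) = v * 1 := by rw [h1]
    rwa [mul_inv_cancel_left, mul_one] at this
  rw [this] at hlt; exact lt_irrefl _ hlt

end Part2

section Part3
variable {G : Subgroup HomeoR}
  (hfree : ∀ g ∈ G, g ≠ 1 → ∀ x : ℝ, g x ≠ x)

lemma zpow_add_apply (f : HomeoR) (a b : ℤ) (x : ℝ) :
    (f^(a+b)) x = (f^a) ((f^b) x) := by
  rw [zpow_add]; rfl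

include hfree

/-- for f positive, f x > x everywhere -/
lemma pos_all {f : HomeoR} (hf : f ∈ G) (h0 : 0 < f 0) : ∀ x, x < f x := by
  have h1 : f ≠ 1 := by
    intro he; rw [he] at h0; simp at h0
  rcases sign_dichotomy hfree hf h1 with h | h
  · exact h
  · exact absurd (h 0) (not_lt.mpr h0.le)

lemma zpow_succ_lt {f : HomeoR} (hf : f ∈ G) (h0 : 0 < f 0) (m : ℤ) (x : ℝ) :
    (f^m) x < (f^(m+1)) x := by
  have : (f^(m+1)) x = f ((f^m) x) := by
    rw [add_comm, zpow_add_apply f 1 m x, zpow_one]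
  rw [this]
  exact pos_all hfree hf h0 _

lemma zpowStrictMono {f : HomeoR} (hf : f ∈ G) (h0 : 0 < f 0) (x : ℝ) :
    StrictMono (fun m : ℤ => (f^m) x) :=
  strictMono_int_of_lt_succ (fun m => zpow_succ_lt hfree hf h0 m x)

/-- the orbit of a positive element is unbounded above -/
lemma orbit_unbdd_above {f : HomeoR} (hf : f ∈ G) (h0 : 0 < f 0) (y x : ℝ) :
    ∃ n : ℕ, x < (f^(n:ℤ)) y := by
  by_contra hb
  push_neg at hb
  set a : ℕ → ℝ := fun n => (f^(n:ℤ)) y with ha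
  have hmono : Monotone a := fun i j hij => by
    rcases eq_or_lt_of_le hij with h | h
    · rw [h]
    · exact ((zpowStrictMono hfree hf h0 y) (by exact_mod_cast h)).le
  have hbdd : BddAbove (Set.range a) := ⟨x, by rintro _ ⟨n, rfl⟩; exact hb n⟩
  have hconv : Tendsto a atTop (𝓝 (⨆ n, a n)) := tendsto_atTop_ciSup hmono hbdd
  set L := ⨆ n, a n
  have hconv2 : Tendsto (fun n => a (n+1)) atTop (𝓝 L) :=
    hconv.comp (tendsto_add_atTop_nat 1)
  have hfa : ∀ n, a (n+1) = f (a n) := by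
    intro n
    show (f^((n:ℤ)+1)) y = f ((f^(n:ℤ)) y)
    rw [add_comm, zpow_add_apply f 1 (n:ℤ) y, zpow_one]
  have hconv3 : Tendsto (fun n => f (a n)) atTop (𝓝 (f L)) :=
    (f.continuous.tendsto L).comp hconv
  have : f L = L := by
    apply tendsto_nhds_unique (hconv3.congr (fun n => (hfa n).symm)) hconv2
  exact absurd this (ne_of_gt (pos_all hfree hf h0 L))

/-- the orbit of a positive element is unbounded below -/
lemma orbit_unbdd_below {f : HomeoR} (hf : f ∈ G) (h0 : 0 < f 0) (y x : ℝ) :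
    ∃ n : ℕ, (f^(-(n:ℤ))) y < x := by
  by_contra hb
  push_neg at hb
  set a : ℕ → ℝ := fun n => (f^(-(n:ℤ))) y with ha
  have hanti : Antitone a := fun i j hij => by
    rcases eq_or_lt_of_le hij with h | h
    · rw [h]
    · exact ((zpowStrictMono hfree hf h0 y)
        (neg_lt_neg (show (i:ℤ) < j by exact_mod_cast h))).le
  have hbdd : BddBelow (Set.range a) := ⟨x, by rintro _ ⟨n, rfl⟩; exact hb n⟩
  have hconv : Tendsto a atTop (𝓝 (⨅ n, a n)) := tendsto_atTop_ciInf hanti hbdd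
  set L := ⨅ n, a n
  have hconv2 : Tendsto (fun n => a (n+1)) atTop (𝓝 L) :=
    hconv.comp (tendsto_add_atTop_nat 1)
  have hfa : ∀ n, a (n+1) = f⁻¹ (a n) := by
    intro n
    show (f^(-((n:ℤ)+1))) y = f⁻¹ ((f^(-(n:ℤ))) y)
    rw [show -((n:ℤ)+1) = (-1) + (-(n:ℤ)) by ring, zpow_add_apply, zpow_neg_one]
  have hconv3 : Tendsto (fun n => f⁻¹ (a n)) atTop (𝓝 (f⁻¹ L)) :=
    ((f⁻¹).continuous.tendsto L).comp hconv
  have hfix : f⁻¹ L = L := by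
    apply tendsto_nhds_unique (hconv3.congr (fun n => (hfa n).symm)) hconv2
  have : f L = L := by
    conv_lhs => rw [← hfix]
    exact f.apply_symm_apply L
  exact absurd this (ne_of_gt (pos_all hfree hf h0 L))

/-- greatest power below: for f positive and any y, there is m with f^m 0 ≤ y < f^(m+1) 0 -/
lemma existsFloor {f : HomeoR} (hf : f ∈ G) (h0 : 0 < f 0) (y : ℝ) :
    ∃ m : ℤ, (f^m) 0 ≤ y ∧ y < (f^(m+1)) 0 := by
  obtain ⟨N, hN⟩ := orbit_unbdd_above hfree hf h0 0 y
  obtain ⟨M, hM⟩ := orbit_unbdd_below hfree hf h0 0 y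
  obtain ⟨m, hm1, hm2⟩ := Int.exists_greatest_of_bdd
    (P := fun z => (f^z) 0 ≤ y)
    ⟨N, fun z hz => by
      by_contra hzN
      push_neg at hzN
      have := zpowStrictMono hfree hf h0 0 (show (N:ℤ) < z by omega)
      exact absurd hN (not_lt.mpr (le_trans this.le hz))⟩
    ⟨-(M:ℤ), hM.le⟩
  refine ⟨m, hm1, ?_⟩
  by_contra hc
  push_neg at hc
  have := hm2 (m+1) hc
  omega

end Part3

section Part4
variable {G : Subgroup HomeoR}
  (hfree : ∀ g ∈ G, g ≠ 1 → ∀ x : ℝ, g x ≠ x)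
include hfree

/-- pointwise inequality flips under inverses -/
lemma ptwise_inv {u v : HomeoR} (hu : u ∈ G) (hv : v ∈ G) (hle : ∀ x, u x ≤ v x) :
    ∀ y, v⁻¹ y ≤ u⁻¹ y := by
  intro y
  have h1 : u (v⁻¹ y) ≤ v (v⁻¹ y) := hle _
  rw [HomeoR.inv_eq_symm, v.apply_symm_apply] at h1
  have := (mono_of_mem hfree (G.inv_mem hu)).monotone h1
  rwa [HomeoR.inv_eq_symm, u.symm_apply_apply] at this

/-- key contradiction: no positive commutator -/
lemma no_pos_commutator {g h : HomeoR} (hg : g ∈ G) (hh : h ∈ G)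
    (hc0 : 0 < ((h*g)⁻¹*(g*h)) 0) : False := by
  set c : HomeoR := (h*g)⁻¹*(g*h) with hcdef
  have hcG : c ∈ G := G.mul_mem (G.inv_mem (G.mul_mem hh hg)) (G.mul_mem hg hh)
  by_cases hmin : ∃ u, u ∈ G ∧ 0 < u 0 ∧ ∀ v ∈ G, 0 < v 0 → u 0 ≤ v 0
  · -- G is cyclic generated by u, hence commutative
    obtain ⟨u, huG, hu0, humin⟩ := hmin
    have hcyc : ∀ k ∈ G, ∃ n : ℤ, k = u^n := by
      intro k hk
      obtain ⟨m, hm1, hm2⟩ := existsFloor hfree huG hu0 (k 0)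
      set w : HomeoR := u^(-m) * k with hwdef
      have hwG : w ∈ G := G.mul_mem (G.zpow_mem huG _) hk
      have hw0 : (0:ℝ) ≤ w 0 := by
        have := (mono_of_mem hfree (G.zpow_mem huG (-m))).monotone hm1
        show (0:ℝ) ≤ (u^(-m)) (k 0)
        calc (0:ℝ) = (u^((-m)+m)) 0 := by rw [neg_add_cancel]; simp
        _ = (u^(-m)) ((u^m) 0) := zpow_add_apply u (-m) m 0
        _ ≤ (u^(-m)) (k 0) := this
      have hw1 : w 0 < u 0 := by
        have := mono_of_mem hfree (G.zpow_mem huG (-m)) hm2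
        show (u^(-m)) (k 0) < u 0
        calc (u^(-m)) (k 0) < (u^(-m)) ((u^(m+1)) 0) := this
        _ = (u^((-m)+(m+1))) 0 := (zpow_add_apply u (-m) (m+1) 0).symm
        _ = u 0 := by norm_num
      rcases eq_or_lt_of_le hw0 with heq | hlt
      · have hwone : w = 1 := eq_one_of_fix hfree hwG heq.symm
        refine ⟨m, ?_⟩
        have : u^m * w = u^m * 1 := by rw [hwone]
        rwa [hwdef, ← mul_assoc, ← zpow_add, add_neg_cancel, zpow_zero, one_mul, mul_one] at this
      · exact absurd hw1 (not_lt.mpr (humin w hwG hlt))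
    obtain ⟨i, hi⟩ := hcyc g hg
    obtain ⟨j, hj⟩ := hcyc h hh
    have hcomm : g * h = h * g := by
      rw [hi, hj, ← zpow_add, ← zpow_add, add_comm]
    have : c = 1 := by rw [hcdef, hcomm, inv_mul_cancel]
    rw [this] at hc0; simp at hc0
  · -- no minimal positive element: arbitrarily small squares
    push_neg at hmin
    -- find δ positive with (δ*δ) 0 ≤ c 0
    obtain ⟨δ₁, hδ₁G, hδ₁0, hδ₁c⟩ := hmin c hcG hc0
    have hsq : ∃ δ : HomeoR, δ ∈ G ∧ 0 < δ 0 ∧ (δ*δ) 0 ≤ c 0 := by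
      by_cases hd : (δ₁*δ₁) 0 ≤ c 0
      · exact ⟨δ₁, hδ₁G, hδ₁0, hd⟩
      · push_neg at hd
        have hptc : ∀ x, c x < (δ₁*δ₁) x :=
          ptwise_lt hfree hcG (G.mul_mem hδ₁G hδ₁G) hd
        refine ⟨δ₁⁻¹ * c, G.mul_mem (G.inv_mem hδ₁G) hcG, ?_, ?_⟩
        · show (0:ℝ) < δ₁⁻¹ (c 0)
          have : δ₁⁻¹ (δ₁ 0) < δ₁⁻¹ (c 0) :=
            mono_of_mem hfree (G.inv_mem hδ₁G) hδ₁c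
          rwa [HomeoR.inv_apply_apply] at this
        · show δ₁⁻¹ (c (δ₁⁻¹ (c 0))) ≤ c 0
          have h1 : c (δ₁⁻¹ (c 0)) < δ₁ (δ₁ (δ₁⁻¹ (c 0))) := hptc _
          rw [HomeoR.apply_inv_apply] at h1
          have := (mono_of_mem hfree (G.inv_mem hδ₁G)).monotone h1.le
          rwa [HomeoR.inv_apply_apply] at this
    obtain ⟨δ, hδG, hδ0, hδsq⟩ := hsq
    -- commutator bound: c 0 < (δ*δ) 0
    obtain ⟨p, hp1, hp2⟩ := existsFloor hfree hδG hδ0 (g 0)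
    obtain ⟨q, hq1, hq2⟩ := existsFloor hfree hδG hδ0 (h 0)
    have hgh : (g*h) 0 < (δ^(p+q+2)) 0 := by
      have h1 : g (h 0) < (δ^(p+1)) (h 0) :=
        ptwise_lt hfree hg (G.zpow_mem hδG _) hp2 _
      have h2 : (δ^(p+1)) (h 0) < (δ^(p+1)) ((δ^(q+1)) 0) :=
        mono_of_mem hfree (G.zpow_mem hδG _) hq2
      calc (g*h) 0 = g (h 0) := rfl
      _ < (δ^(p+1)) ((δ^(q+1)) 0) := lt_trans h1 h2
      _ = (δ^(p+q+2)) 0 := by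
          rw [← zpow_add_apply]; norm_num; ring_nf
    have hhg : (δ^(q+p)) 0 ≤ (h*g) 0 := by
      have h1 : (δ^q) ((δ^p) 0) ≤ (δ^q) (g 0) :=
        (mono_of_mem hfree (G.zpow_mem hδG _)).monotone hp1
      have h2 : (δ^q) (g 0) ≤ h (g 0) :=
        ptwise hfree (G.zpow_mem hδG _) hh hq1 _
      calc (δ^(q+p)) 0 = (δ^q) ((δ^p) 0) := zpow_add_apply δ q p 0
      _ ≤ h (g 0) := le_trans h1 h2
      _ = (h*g) 0 := rfl
    have hinv : ∀ y, ((h*g)⁻¹) y ≤ (δ^(-(q+p))) y := by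
      have hpt : ∀ x, (δ^(q+p)) x ≤ (h*g) x :=
        ptwise hfree (G.zpow_mem hδG _) (G.mul_mem hh hg) hhg
      have := ptwise_inv hfree (G.zpow_mem hδG _) (G.mul_mem hh hg) hpt
      intro y
      have h2 := this y
      rwa [← zpow_neg] at h2
    have hfinal : c 0 < (δ*δ) 0 := by
      have h1 : ((h*g)⁻¹) ((g*h) 0) < ((h*g)⁻¹) ((δ^(p+q+2)) 0) :=
        mono_of_mem hfree (G.inv_mem (G.mul_mem hh hg)) hgh
      have h2 : ((h*g)⁻¹) ((δ^(p+q+2)) 0) ≤ (δ^(-(q+p))) ((δ^(p+q+2)) 0) := hinv _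
      have h3 : (δ^(-(q+p))) ((δ^(p+q+2)) 0) = (δ*δ) 0 := by
        rw [← zpow_add_apply]
        have : -(q+p) + (p+q+2) = 2 := by ring
        rw [this]
        show (δ^(2:ℤ)) 0 = δ (δ 0)
        rw [show (2:ℤ) = 1+1 by norm_num, zpow_add_apply, zpow_one]
      calc c 0 = ((h*g)⁻¹) ((g*h) 0) := rfl
      _ < (δ^(-(q+p))) ((δ^(p+q+2)) 0) := lt_of_lt_of_le h1 h2
      _ = (δ*δ) 0 := h3
    exact absurd hδsq (not_le.mpr hfinal)

/-- G is abelian -/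
lemma abelianG : ∀ a ∈ G, ∀ b ∈ G, a * b = b * a := by
  intro a ha b hb
  by_contra hne
  set c : HomeoR := (b*a)⁻¹*(a*b) with hcdef
  have hcG : c ∈ G := G.mul_mem (G.inv_mem (G.mul_mem hb ha)) (G.mul_mem ha hb)
  have hc1 : c ≠ 1 := by
    intro he
    apply hne
    have : (b*a) * c = (b*a) * 1 := by rw [he]
    rwa [hcdef, mul_inv_cancel_left, mul_one] at this
  have hc0 : c 0 ≠ 0 := hfree c hcG hc1 0
  rcases lt_or_gt_of_ne hc0 with hneg | hpos
  · -- then the commutator of (b,a) is positive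
    apply no_pos_commutator hfree hb ha (g := b) (h := a)
    have hinvpos : 0 < (c⁻¹) 0 := by
      by_contra hle
      push_neg at hle
      have := (mono_of_mem hfree hcG).monotone hle
      rw [HomeoR.apply_inv_apply] at this
      have : c 0 ≥ 0 := by
        calc (0:ℝ) ≤ c 0 := by linarith [this, (mono_of_mem hfree hcG).monotone hle]
        _ = c 0 := rfl
      linarith
    have : c⁻¹ = (a*b)⁻¹*(b*a) := by
      rw [hcdef, mul_inv_rev, inv_inv]
    rwa [← this]
  · exact no_pos_commutator hfree ha hb hpos

end Part4

noncomputable section Part5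

/-- the cut set defining the translation number of `g` relative to `f` -/
def tCut (f g : HomeoR) : Set ℝ :=
  {r | ∃ (m : ℤ) (n : ℕ), 0 < n ∧ r = (m:ℝ)/(n:ℝ) ∧ (f^m) 0 ≤ (g^(n:ℤ)) 0}

/-- translation number -/
def tau (f g : HomeoR) : ℝ := sSup (tCut f g)

variable {G : Subgroup HomeoR}
  (hfree : ∀ g ∈ G, g ≠ 1 → ∀ x : ℝ, g x ≠ x)
  {f : HomeoR} (hfG : f ∈ G) (hf0 : 0 < f 0)
include hfree hfG hf0

/-- pointwise orbit comparison for natural powers -/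
lemma pow_le_pow_orbit {g k : HomeoR} (hg : g ∈ G) (hk : k ∈ G)
    (hpt : ∀ x, g x ≤ k x) : ∀ n : ℕ, (g^(n:ℤ)) 0 ≤ (k^(n:ℤ)) 0 := by
  intro n
  induction n with
  | zero => simp
  | succ n ih =>
    push_cast
    rw [show ((n:ℤ)+1) = 1 + (n:ℤ) by ring, zpow_add_apply, zpow_add_apply, zpow_one, zpow_one]
    calc g ((g^(n:ℤ)) 0) ≤ g ((k^(n:ℤ)) 0) := (mono_of_mem hfree hg).monotone ih
    _ ≤ k ((k^(n:ℤ)) 0) := hpt _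

/-- scaling of cut inequalities -/
lemma cut_scale {g : HomeoR} (hg : g ∈ G) {m : ℤ} {n : ℕ}
    (hle : (f^m) 0 ≤ (g^(n:ℤ)) 0) :
    ∀ k : ℕ, 0 < k → (f^(m*(k:ℤ))) 0 ≤ (g^((n:ℤ)*(k:ℤ))) 0 := by
  have key : ∀ k : ℕ, (f^(m*((k:ℤ)+1))) 0 ≤ (g^((n:ℤ)*((k:ℤ)+1))) 0 := by
    intro k
    induction k with
    | zero => simpa using hle
    | succ k ih =>
      have hpt : ∀ x, (f^(m*((k:ℤ)+1))) x ≤ (g^((n:ℤ)*((k:ℤ)+1))) x :=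
        ptwise hfree (G.zpow_mem hfG _) (G.zpow_mem hg _) ih
      push_cast
      rw [show m*(((k:ℤ)+1)+1) = m*((k:ℤ)+1) + m by ring,
        show (n:ℤ)*(((k:ℤ)+1)+1) = (n:ℤ)*((k:ℤ)+1) + (n:ℤ) by ring,
        zpow_add_apply, zpow_add_apply]
      calc (f^(m*((k:ℤ)+1))) ((f^m) 0) ≤ (f^(m*((k:ℤ)+1))) ((g^(n:ℤ)) 0) :=
            (mono_of_mem hfree (G.zpow_mem hfG _)).monotone hle
      _ ≤ (g^((n:ℤ)*((k:ℤ)+1))) ((g^(n:ℤ)) 0) := hpt _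
  intro k hk
  obtain ⟨k', rfl⟩ : ∃ k', k = k' + 1 := ⟨k - 1, by omega⟩
  have := key k'
  push_cast at this ⊢
  convert this using 3 <;> push_cast <;> ring

lemma cut_nonempty {g : HomeoR} (hg : g ∈ G) : (tCut f g).Nonempty := by
  obtain ⟨n, hn⟩ := orbit_unbdd_below hfree hfG hf0 0 (g 0)
  exact ⟨(-(n:ℤ):ℝ)/(1:ℕ), -(n:ℤ), 1, by norm_num, by norm_num, by
    simpa using hn.le⟩

lemma cut_bddAbove {g : HomeoR} (hg : g ∈ G) : BddAbove (tCut f g) := by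
  obtain ⟨p, hp⟩ := orbit_unbdd_above hfree hfG hf0 0 (g 0)
  have key : ∀ k : ℕ, (g^((k:ℤ)+1)) 0 < (f^((p:ℤ)*((k:ℤ)+1))) 0 := by
    have hpt : ∀ x, g x < (f^(p:ℤ)) x := ptwise_lt hfree hg (G.zpow_mem hfG _) hp
    intro k
    induction k with
    | zero => simpa using hp
    | succ k ih =>
      push_cast
      rw [show ((k:ℤ)+1)+1 = 1 + ((k:ℤ)+1) by ring,
        show (p:ℤ)*(1+((k:ℤ)+1)) = (p:ℤ) + (p:ℤ)*((k:ℤ)+1) by ring]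
      calc (g^(1+((k:ℤ)+1))) 0 = g ((g^((k:ℤ)+1)) 0) := by
            rw [zpow_add_apply, zpow_one]
      _ < (f^(p:ℤ)) ((g^((k:ℤ)+1)) 0) := hpt _
      _ < (f^(p:ℤ)) ((f^((p:ℤ)*((k:ℤ)+1))) 0) := mono_of_mem hfree (G.zpow_mem hfG _) ih
      _ = (f^((p:ℤ) + (p:ℤ)*((k:ℤ)+1))) 0 := (zpow_add_apply f _ _ 0).symm
  refine ⟨p, fun r hr => ?_⟩
  obtain ⟨m, n, hn, rfl, hle⟩ := hr
  obtain ⟨k, rfl⟩ : ∃ k, n = k + 1 := ⟨n - 1, by omega⟩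
  have h1 : (f^m) 0 < (f^((p:ℤ)*((k:ℤ)+1))) 0 := by
    refine lt_of_le_of_lt hle ?_
    have := key k
    push_cast at this ⊢
    convert this using 3
  have h2 : m < (p:ℤ)*((k:ℤ)+1) := by
    by_contra hc
    push_neg at hc
    rcases eq_or_lt_of_le hc with h | h
    · rw [h] at h1; exact lt_irrefl _ h1
    · exact absurd (zpowStrictMono hfree hfG hf0 0 h) (not_lt.mpr h1.le)
  rw [div_le_iff₀ (by positivity)]
  calc ((m:ℝ)) ≤ ((p:ℤ)*((k:ℤ)+1) : ℤ) := by exact_mod_cast h2.le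
  _ ≤ (p:ℝ)*((k:ℕ)+1:ℝ) := by push_cast; ring_nf; rfl
  _ = (p:ℝ)*(((k+1:ℕ)):ℝ) := by push_cast; ring

lemma tau_mem_le {g : HomeoR} (hg : g ∈ G) {r : ℝ} (hr : r ∈ tCut f g) : r ≤ tau f g :=
  le_csSup (cut_bddAbove hfree hfG hf0 hg) hr

lemma tau_le_of_le {g k : HomeoR} (hg : g ∈ G) (hk : k ∈ G) (h0 : g 0 ≤ k 0) :
    tau f g ≤ tau f k := by
  have hsub : tCut f g ⊆ tCut f k := by
    rintro r ⟨m, n, hn, rfl, hle⟩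
    exact ⟨m, n, hn, rfl, le_trans hle
      (pow_le_pow_orbit hfree hfG hf0 hg hk (ptwise hfree hg hk h0) n)⟩
  exact csSup_le_csSup (cut_bddAbove hfree hfG hf0 hk) (cut_nonempty hfree hfG hf0 hg) hsub

lemma tau_one : tau f (1:HomeoR) = 0 := by
  apply le_antisymm
  · apply csSup_le (cut_nonempty hfree hfG hf0 G.one_mem)
    rintro r ⟨m, n, hn, rfl, hle⟩
    have h0 : (f^m) 0 ≤ 0 := by simpa using hle
    have hm : m ≤ 0 := by
      by_contra hc
      push_neg at hc
      have := zpowStrictMono hfree hfG hf0 0 hc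
      simp only [zpow_zero] at this
      have h00 : (0:ℝ) < (f^m) 0 := by simpa using this
      linarith
    apply div_nonpos_of_nonpos_of_nonneg
    · exact_mod_cast hm
    · positivity
  · apply le_csSup (cut_bddAbove hfree hfG hf0 G.one_mem)
    exact ⟨0, 1, by norm_num, by norm_num, by norm_num⟩

end Part5

section Part6
variable {G : Subgroup HomeoR}
  (hfree : ∀ g ∈ G, g ≠ 1 → ∀ x : ℝ, g x ≠ x)
  {f : HomeoR} (hfG : f ∈ G) (hf0 : 0 < f 0)
include hfree hfG hf0

lemma cut_add {g k : HomeoR} (hg : g ∈ G) (hk : k ∈ G) {r s : ℝ}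
    (hr : r ∈ tCut f g) (hs : s ∈ tCut f k) : r + s ∈ tCut f (g*k) := by
  obtain ⟨m, n, hn, rfl, hleg⟩ := hr
  obtain ⟨m', n', hn', rfl, hlek⟩ := hs
  have hcomm : Commute g k := abelianG hfree g hg k hk
  refine ⟨m*(n':ℤ) + m'*(n:ℤ), n*n', Nat.mul_pos hn hn', ?_, ?_⟩
  · have h1 : ((n:ℝ)) ≠ 0 := by positivity
    have h2 : ((n':ℝ)) ≠ 0 := by positivity
    push_cast
    field_simp
  · have A := cut_scale hfree hfG hf0 hg hleg n' hn'
    have B := cut_scale hfree hfG hf0 hk hlek n hn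
    have hptA : ∀ x, (f^(m*(n':ℤ))) x ≤ (g^((n:ℤ)*(n':ℤ))) x :=
      ptwise hfree (G.zpow_mem hfG _) (G.zpow_mem hg _) A
    calc (f^(m*(n':ℤ) + m'*(n:ℤ))) 0 = (f^(m*(n':ℤ))) ((f^(m'*(n:ℤ))) 0) :=
          zpow_add_apply f _ _ 0
    _ ≤ (f^(m*(n':ℤ))) ((k^((n':ℤ)*(n:ℤ))) 0) :=
        (mono_of_mem hfree (G.zpow_mem hfG _)).monotone B
    _ ≤ (g^((n:ℤ)*(n':ℤ))) ((k^((n':ℤ)*(n:ℤ))) 0) := hptA _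
    _ = ((g*k)^(((n*n':ℕ)):ℤ)) 0 := by
        rw [hcomm.mul_zpow]
        have e1 : ((n*n':ℕ):ℤ) = (n:ℤ)*(n':ℤ) := by push_cast; ring
        have e2 : (n':ℤ)*(n:ℤ) = (n:ℤ)*(n':ℤ) := by ring
        rw [e1, e2]
        rfl

lemma tau_superadd {g k : HomeoR} (hg : g ∈ G) (hk : k ∈ G) :
    tau f g + tau f k ≤ tau f (g*k) := by
  have key : ∀ r ∈ tCut f g, ∀ s ∈ tCut f k, r + s ≤ tau f (g*k) := fun r hr s hs =>
    tau_mem_le hfree hfG hf0 (G.mul_mem hg hk) (cut_add hfree hfG hf0 hg hk hr hs)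
  have h1 : ∀ r ∈ tCut f g, r ≤ tau f (g*k) - tau f k := by
    intro r hr
    have : tau f k ≤ tau f (g*k) - r :=
      csSup_le (cut_nonempty hfree hfG hf0 hk) (fun s hs => by linarith [key r hr s hs])
    linarith
  have := csSup_le (cut_nonempty hfree hfG hf0 hg) h1
  have h2 : tau f g ≤ tau f (g*k) - tau f k := this
  linarith

lemma tau_inv_add {g : HomeoR} (hg : g ∈ G) : tau f g + tau f g⁻¹ = 0 := by
  apply le_antisymm
  · have h := tau_superadd hfree hfG hf0 hg (G.inv_mem hg)
    rw [mul_inv_cancel] at h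
    rw [tau_one hfree hfG hf0] at h
    exact h
  · -- lower bound: for every n, tau g + tau g⁻¹ ≥ -1/n
    by_contra hc
    push_neg at hc
    obtain ⟨n, hn⟩ := exists_nat_one_div_lt (show (0:ℝ) < -(tau f g + tau f g⁻¹) by linarith)
    set N : ℕ := n + 1 with hN
    have hNpos : 0 < N := Nat.succ_pos n
    obtain ⟨M, hM1, hM2⟩ := existsFloor hfree hfG hf0 ((g^(N:ℤ)) 0)
    -- M/N ∈ cut g
    have hmem1 : ((M:ℝ))/(N:ℝ) ∈ tCut f g := ⟨M, N, hNpos, rfl, hM1⟩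
    -- (-(M+1))/N ∈ cut g⁻¹
    have hmem2 : ((-(M+1):ℤ):ℝ)/(N:ℝ) ∈ tCut f g⁻¹ := by
      refine ⟨-(M+1), N, hNpos, rfl, ?_⟩
      -- f^{-(M+1)} 0 ≤ (g⁻¹)^N 0  ⟺  g^N (f^{-(M+1)} 0) ≤ 0
      have hcomm : Commute f g := abelianG hfree f hfG g hg
      have h1 : (f^(-(M+1))) ((g^(N:ℤ)) 0) ≤ (f^(-(M+1))) ((f^(M+1)) 0) :=
        (mono_of_mem hfree (G.zpow_mem hfG _)).monotone hM2.le
      have h2 : (f^(-(M+1))) ((f^(M+1)) 0) = 0 := by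
        rw [← zpow_add_apply, neg_add_cancel, zpow_zero, HomeoR.one_apply]
      have h3 : (f^(-(M+1))) ((g^(N:ℤ)) 0) = (g^(N:ℤ)) ((f^(-(M+1))) 0) := by
        have := (hcomm.zpow_zpow (-(M+1)) (N:ℤ)).symm
        calc (f^(-(M+1))) ((g^(N:ℤ)) 0) = ((f^(-(M+1)) * g^(N:ℤ))) 0 := rfl
        _ = ((g^(N:ℤ) * f^(-(M+1)))) 0 := by rw [this]
        _ = (g^(N:ℤ)) ((f^(-(M+1))) 0) := rfl
      have h4 : (g^(N:ℤ)) ((f^(-(M+1))) 0) ≤ 0 := by rw [← h3]; linarith [h1, h2]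
      have h5 : (f^(-(M+1))) 0 ≤ (g^(-(N:ℤ))) 0 := by
        have := (mono_of_mem hfree (G.zpow_mem hg (-(N:ℤ)))).monotone h4
        have e : (g^(-(N:ℤ))) ((g^(N:ℤ)) ((f^(-(M+1))) 0)) = (f^(-(M+1))) 0 := by
          rw [← zpow_add_apply, neg_add_cancel, zpow_zero, HomeoR.one_apply]
        rwa [e] at this
      rwa [inv_zpow']
    have t1 : ((M:ℝ))/(N:ℝ) ≤ tau f g := tau_mem_le hfree hfG hf0 hg hmem1
    have t2 : ((-(M+1):ℤ):ℝ)/(N:ℝ) ≤ tau f g⁻¹ :=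
      tau_mem_le hfree hfG hf0 (G.inv_mem hg) hmem2
    have hsum : -(1:ℝ)/(N:ℝ) ≤ tau f g + tau f g⁻¹ := by
      have e : ((M:ℝ))/(N:ℝ) + ((-(M+1):ℤ):ℝ)/(N:ℝ) = -(1:ℝ)/(N:ℝ) := by
        push_cast
        have : ((N:ℝ)) ≠ 0 := by positivity
        field_simp
        ring
      linarith
    have hNr : (N:ℝ) = (n:ℝ)+1 := by simp [hN]
    rw [hNr, neg_div] at hsum
    linarith
end Part6

section Part7
variable {G : Subgroup HomeoR}
  (hfree : ∀ g ∈ G, g ≠ 1 → ∀ x : ℝ, g x ≠ x)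
  {f : HomeoR} (hfG : f ∈ G) (hf0 : 0 < f 0)
include hfree hfG hf0

lemma tau_hom {g k : HomeoR} (hg : g ∈ G) (hk : k ∈ G) :
    tau f (g*k) = tau f g + tau f k := by
  have h1 := tau_superadd hfree hfG hf0 hg hk
  have h2 := tau_superadd hfree hfG hf0 (G.inv_mem hk) (G.inv_mem hg)
  rw [← mul_inv_rev] at h2
  have h3 := tau_inv_add hfree hfG hf0 hg
  have h4 := tau_inv_add hfree hfG hf0 hk
  have h5 := tau_inv_add hfree hfG hf0 (G.mul_mem hg hk)
  linarith

lemma tau_self : tau f f = 1 := by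
  apply le_antisymm
  · apply csSup_le (cut_nonempty hfree hfG hf0 hfG)
    rintro r ⟨m, n, hn, rfl, hle⟩
    have hmn : m ≤ (n:ℤ) := by
      by_contra hc
      push_neg at hc
      exact absurd (zpowStrictMono hfree hfG hf0 0 hc) (not_lt.mpr hle)
    rw [div_le_one (by positivity)]
    exact_mod_cast hmn
  · apply le_csSup (cut_bddAbove hfree hfG hf0 hfG)
    exact ⟨1, 1, by norm_num, by norm_num, by norm_num⟩

lemma tau_pos {g : HomeoR} (hg : g ∈ G) (h0 : 0 < g 0) : 0 < tau f g := by
  obtain ⟨n, hn⟩ := orbit_unbdd_above hfree hg h0 0 (f 0)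
  have hn0 : 0 < n := by
    rcases Nat.eq_zero_or_pos n with h | h
    · subst h; simp only [Nat.cast_zero, zpow_zero, HomeoR.one_apply] at hn; linarith
    · exact h
  have hmem : (1:ℝ)/(n:ℝ) ∈ tCut f g := ⟨1, n, hn0, by norm_num, by
    rw [zpow_one]; exact hn.le⟩
  have := tau_mem_le hfree hfG hf0 hg hmem
  have hpos : (0:ℝ) < 1/(n:ℝ) := by positivity
  linarith

lemma tau_zpow {g : HomeoR} (hg : g ∈ G) (z : ℤ) :
    tau f (g^z) = z * tau f g := by
  have hnat : ∀ n : ℕ, tau f (g^(n:ℤ)) = n * tau f g := by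
    intro n
    induction n with
    | zero => simpa using tau_one hfree hfG hf0
    | succ n ih =>
      have : g^((n:ℤ)+1) = g^(n:ℤ) * g := by rw [zpow_add_one]
      push_cast
      rw [this, tau_hom hfree hfG hf0 (G.zpow_mem hg _) hg, ih]
      ring
  rcases le_or_gt 0 z with hz | hz
  · obtain ⟨n, rfl⟩ : ∃ n : ℕ, z = (n:ℤ) := ⟨z.toNat, (Int.toNat_of_nonneg hz).symm⟩
    exact_mod_cast hnat n
  · obtain ⟨n, rfl⟩ : ∃ n : ℕ, z = -(n:ℤ) := ⟨(-z).toNat, by omega⟩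
    have h1 : g^(-(n:ℤ)) = (g^(n:ℤ))⁻¹ := by rw [zpow_neg]
    have h2 := tau_inv_add hfree hfG hf0 (G.zpow_mem hg (n:ℤ))
    rw [h1]
    have := hnat n
    push_cast
    linarith

lemma tau_lt_of_lt {g k : HomeoR} (hg : g ∈ G) (hk : k ∈ G) (h0 : g 0 < k 0) :
    tau f g < tau f k := by
  set w : HomeoR := k * g⁻¹ with hw
  have hwG : w ∈ G := G.mul_mem hk (G.inv_mem hg)
  have hw0 : 0 < w 0 := by
    have hpt : ∀ x, g x < k x := ptwise_lt hfree hg hk h0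
    have : g (g⁻¹ 0) < k (g⁻¹ 0) := hpt _
    rw [HomeoR.apply_inv_apply] at this
    exact this
  have hpos := tau_pos hfree hfG hf0 hwG hw0
  have hhom : tau f w = tau f k + tau f g⁻¹ :=
    tau_hom hfree hfG hf0 hk (G.inv_mem hg)
  have hinv := tau_inv_add hfree hfG hf0 hg
  linarith

end Part7

section Part8
variable {G : Subgroup HomeoR}
  (hfree : ∀ g ∈ G, g ≠ 1 → ∀ x : ℝ, g x ≠ x)
  {f : HomeoR} (hfG : f ∈ G) (hf0 : 0 < f 0)
include hfree hfG hf0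

lemma cyclic_of_min {u : HomeoR} (huG : u ∈ G) (hu0 : 0 < u 0)
    (hmin : ∀ v ∈ G, 0 < v 0 → u 0 ≤ v 0) : ∀ k ∈ G, ∃ n : ℤ, k = u^n := by
  intro k hk
  obtain ⟨m, hm1, hm2⟩ := existsFloor hfree huG hu0 (k 0)
  set w : HomeoR := u^(-m) * k with hwdef
  have hwG : w ∈ G := G.mul_mem (G.zpow_mem huG _) hk
  have hw0 : (0:ℝ) ≤ w 0 := by
    have := (mono_of_mem hfree (G.zpow_mem huG (-m))).monotone hm1
    show (0:ℝ) ≤ (u^(-m)) (k 0)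
    calc (0:ℝ) = (u^((-m)+m)) 0 := by rw [neg_add_cancel]; simp
    _ = (u^(-m)) ((u^m) 0) := zpow_add_apply u (-m) m 0
    _ ≤ (u^(-m)) (k 0) := this
  have hw1 : w 0 < u 0 := by
    have := mono_of_mem hfree (G.zpow_mem huG (-m)) hm2
    show (u^(-m)) (k 0) < u 0
    calc (u^(-m)) (k 0) < (u^(-m)) ((u^(m+1)) 0) := this
    _ = (u^((-m)+(m+1))) 0 := (zpow_add_apply u (-m) (m+1) 0).symm
    _ = u 0 := by norm_num
  rcases eq_or_lt_of_le hw0 with heq | hlt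
  · have hwone : w = 1 := eq_one_of_fix hfree hwG heq.symm
    refine ⟨m, ?_⟩
    have : u^m * w = u^m * 1 := by rw [hwone]
    rwa [hwdef, ← mul_assoc, ← zpow_add, add_neg_cancel, zpow_zero, one_mul, mul_one] at this
  · exact absurd hw1 (not_lt.mpr (hmin w hwG hlt))

lemma exists_h_cyclic {u : HomeoR} (huG : u ∈ G) (hu0 : 0 < u 0)
    (hmin : ∀ v ∈ G, 0 < v 0 → u 0 ≤ v 0) :
    ∃ h : ℝ → ℝ, MonotoneProper h ∧ ∀ g ∈ G, ∀ x : ℝ, h ((g:HomeoR) x) = h x + tau f g := by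
  set c : ℝ := tau f u with hcdef
  have hc : 0 < c := tau_pos hfree hfG hf0 huG hu0
  have Nspec : ∀ y : ℝ, ∃ m : ℤ, (u^m) 0 ≤ y ∧ y < (u^(m+1)) 0 :=
    existsFloor hfree huG hu0
  set N : ℝ → ℤ := fun y => (Nspec y).choose with hNdef
  have hN1 : ∀ y, (u^(N y)) 0 ≤ y := fun y => (Nspec y).choose_spec.1
  have hN2 : ∀ y, y < (u^(N y + 1)) 0 := fun y => (Nspec y).choose_spec.2
  have Nuniq : ∀ y m, (u^m) 0 ≤ y → y < (u^(m+1)) 0 → N y = m := by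
    intro y m h1 h2
    by_contra hne
    rcases lt_or_gt_of_ne hne with h | h
    · have : N y + 1 ≤ m := h
      have := (zpowStrictMono hfree huG hu0 0).monotone this
      linarith [hN2 y, h1]
    · have : m + 1 ≤ N y := h
      have := (zpowStrictMono hfree huG hu0 0).monotone this
      linarith [hN1 y, h2]
  have hshift : ∀ (n : ℤ) (x : ℝ), N ((u^n) x) = N x + n := by
    intro n x
    apply Nuniq
    · calc (u^(N x + n)) 0 = (u^(n + N x)) 0 := by rw [add_comm]
      _ = (u^n) ((u^(N x)) 0) := zpow_add_apply u n (N x) 0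
      _ ≤ (u^n) x := (mono_of_mem hfree (G.zpow_mem huG n)).monotone (hN1 x)
    · calc (u^n) x < (u^n) ((u^(N x + 1)) 0) :=
          mono_of_mem hfree (G.zpow_mem huG n) (hN2 x)
      _ = (u^(n + (N x + 1))) 0 := (zpow_add_apply u n (N x + 1) 0).symm
      _ = (u^((N x + n) + 1)) 0 := by ring_nf
  set h : ℝ → ℝ := fun x => c * ((N x : ℝ)) + c * ((u^(-(N x))) x) / (u 0) with hhdef
  have hfr0 : ∀ x, 0 ≤ (u^(-(N x))) x := by
    intro x
    have := (mono_of_mem hfree (G.zpow_mem huG (-(N x)))).monotone (hN1 x)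
    calc (0:ℝ) = (u^(-(N x) + N x)) 0 := by rw [neg_add_cancel]; simp
    _ = (u^(-(N x))) ((u^(N x)) 0) := zpow_add_apply u _ _ 0
    _ ≤ (u^(-(N x))) x := this
  have hfr1 : ∀ x, (u^(-(N x))) x < u 0 := by
    intro x
    have := mono_of_mem hfree (G.zpow_mem huG (-(N x))) (hN2 x)
    calc (u^(-(N x))) x < (u^(-(N x))) ((u^(N x + 1)) 0) := this
    _ = (u^(-(N x) + (N x + 1))) 0 := (zpow_add_apply u _ _ 0).symm
    _ = u 0 := by norm_num
  have hequiv0 : ∀ (n : ℤ) (x : ℝ), h ((u^n) x) = h x + (n:ℝ) * c := by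
    intro n x
    have e1 : N ((u^n) x) = N x + n := hshift n x
    have e2 : (u^(-(N x + n))) ((u^n) x) = (u^(-(N x))) x := by
      calc (u^(-(N x + n))) ((u^n) x) = (u^(-(N x + n) + n)) x := (zpow_add_apply u _ _ x).symm
      _ = (u^(-(N x))) x := by ring_nf
    simp only [hhdef, e1, e2]
    push_cast
    ring
  have hmono : Monotone h := by
    intro x y hxy
    have hNle : N x ≤ N y := by
      have h1 : (u^(N x)) 0 < (u^(N y + 1)) 0 := lt_of_le_of_lt (le_trans (hN1 x) hxy) (hN2 y)
      have h2 : N x < N y + 1 := by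
        by_contra hcon
        push_neg at hcon
        exact absurd ((zpowStrictMono hfree huG hu0 0).monotone hcon) (not_le.mpr h1)
      omega
    rcases eq_or_lt_of_le hNle with he | hl
    · have hfr : (u^(-(N x))) x ≤ (u^(-(N x))) y :=
        (mono_of_mem hfree (G.zpow_mem huG _)).monotone hxy
      simp only [hhdef, ← he]
      have h' : c * ((u^(-(N x))) x) ≤ c * ((u^(-(N x))) y) :=
        mul_le_mul_of_nonneg_left hfr hc.le
      have : c * ((u^(-(N x))) x) / u 0 ≤ c * ((u^(-(N x))) y) / u 0 :=
        (div_le_div_iff_of_pos_right hu0).mpr h'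
      linarith
    · have h1 : h x < c * ((N x : ℝ)) + c := by
        simp only [hhdef]
        have : c * ((u^(-(N x))) x) / u 0 < c := by
          rw [div_lt_iff₀ hu0]
          nlinarith [hfr1 x, hfr0 x]
        linarith
      have h2 : c * ((N x : ℝ)) + c ≤ c * ((N y : ℝ)) := by
        have : ((N x : ℝ)) + 1 ≤ ((N y : ℝ)) := by exact_mod_cast hl
        nlinarith
      have h3 : c * ((N y : ℝ)) ≤ h y := by
        simp only [hhdef]
        have : 0 ≤ c * ((u^(-(N y))) y) / u 0 :=
          div_nonneg (mul_nonneg hc.le (hfr0 y)) hu0.le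
        linarith
      linarith
  have hsurj : Surjective h := by
    intro y
    set j : ℤ := ⌊y/c⌋ with hj
    set t : ℝ := Int.fract (y/c) with ht
    have ht0 : 0 ≤ t := Int.fract_nonneg _
    have ht1 : t < 1 := Int.fract_lt_one _
    have hyj : y = c * (j:ℝ) + c * t := by
      have : (j:ℝ) + t = y/c := by rw [hj, ht]; exact Int.floor_add_fract _
      field_simp at this ⊢
      nlinarith [this]
    refine ⟨(u^j) (t * u 0), ?_⟩
    have hNx : N ((u^j) (t * u 0)) = j := by
      apply Nuniq
      · have h0 : (0:ℝ) ≤ t * u 0 := by positivity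
        have := (mono_of_mem hfree (G.zpow_mem huG j)).monotone h0
        simpa using this
      · have h0 : t * u 0 < u 0 := by nlinarith
        have := mono_of_mem hfree (G.zpow_mem huG j) h0
        calc (u^j) (t * u 0) < (u^j) (u 0) := this
        _ = (u^(j+1)) 0 := by
            rw [show j + 1 = j + 1 by rfl, zpow_add_apply u j 1, zpow_one]
    have hfrx : (u^(-j)) ((u^j) (t * u 0)) = t * u 0 := by
      calc (u^(-j)) ((u^j) (t * u 0)) = (u^(-j+j)) (t * u 0) := (zpow_add_apply u _ _ _).symm
      _ = t * u 0 := by rw [neg_add_cancel]; simp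
    simp only [hhdef, hNx, hfrx]
    rw [mul_div_assoc, mul_div_assoc, div_self (ne_of_gt hu0), mul_one]
    linarith [hyj]
  have hcont : Continuous h := hmono.continuous_of_surjective hsurj
  refine ⟨h, ⟨hcont, hmono, ?_, ?_⟩, ?_⟩
  · exact tendsto_atTop_atTop_of_monotone hmono (fun b => ⟨(hsurj b).choose, (hsurj b).choose_spec.ge⟩)
  · exact tendsto_atBot_atBot_of_monotone hmono (fun b => ⟨(hsurj b).choose, (hsurj b).choose_spec.le⟩)
  · intro g hg x
    obtain ⟨n, rfl⟩ := cyclic_of_min hfree hfG hf0 huG hu0 hmin g hg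
    rw [hequiv0 n x, tau_zpow hfree hfG hf0 huG n]

end Part8

section Part9
variable {G : Subgroup HomeoR}
  (hfree : ∀ g ∈ G, g ≠ 1 → ∀ x : ℝ, g x ≠ x)
  {f : HomeoR} (hfG : f ∈ G) (hf0 : 0 < f 0)
include hfree hfG hf0

lemma exists_h_dense
    (hnomin : ∀ v ∈ G, 0 < v 0 → ∃ w, w ∈ G ∧ 0 < w 0 ∧ w 0 < v 0) :
    ∃ h : ℝ → ℝ, MonotoneProper h ∧ ∀ g ∈ G, ∀ x : ℝ, h ((g:HomeoR) x) = h x + tau f g := by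
  -- small squares
  have hsq : ∀ v, v ∈ G → 0 < v 0 → ∃ δ, δ ∈ G ∧ 0 < δ 0 ∧ (δ*δ) 0 ≤ v 0 := by
    intro v hvG hv0
    obtain ⟨δ₁, hδ₁G, hδ₁0, hδ₁c⟩ := hnomin v hvG hv0
    by_cases hd : (δ₁*δ₁) 0 ≤ v 0
    · exact ⟨δ₁, hδ₁G, hδ₁0, hd⟩
    · push_neg at hd
      have hptc : ∀ x, v x < (δ₁*δ₁) x :=
        ptwise_lt hfree hvG (G.mul_mem hδ₁G hδ₁G) hd
      refine ⟨δ₁⁻¹ * v, G.mul_mem (G.inv_mem hδ₁G) hvG, ?_, ?_⟩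
      · show (0:ℝ) < δ₁⁻¹ (v 0)
        have : δ₁⁻¹ (δ₁ 0) < δ₁⁻¹ (v 0) :=
          mono_of_mem hfree (G.inv_mem hδ₁G) hδ₁c
        rwa [HomeoR.inv_apply_apply] at this
      · show δ₁⁻¹ (v (δ₁⁻¹ (v 0))) ≤ v 0
        have h1 : v (δ₁⁻¹ (v 0)) < δ₁ (δ₁ (δ₁⁻¹ (v 0))) := hptc _
        rw [HomeoR.apply_inv_apply] at h1
        have := (mono_of_mem hfree (G.inv_mem hδ₁G)).monotone h1.le
        rwa [HomeoR.inv_apply_apply] at this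
  -- arbitrarily small positive translation numbers
  have hsmalltau : ∀ k : ℕ, ∃ δ, δ ∈ G ∧ 0 < δ 0 ∧ tau f δ ≤ (1/2)^k := by
    intro k
    induction k with
    | zero => exact ⟨f, hfG, hf0, by rw [tau_self hfree hfG hf0]; norm_num⟩
    | succ k ih =>
      obtain ⟨δ, hδG, hδ0, hδτ⟩ := ih
      obtain ⟨δ', hδ'G, hδ'0, hδ'sq⟩ := hsq δ hδG hδ0
      have h1 : tau f (δ'*δ') ≤ tau f δ :=
        tau_le_of_le hfree hfG hf0 (G.mul_mem hδ'G hδ'G) hδG hδ'sq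
      have h2 : tau f (δ'*δ') = tau f δ' + tau f δ' :=
        tau_hom hfree hfG hf0 hδ'G hδ'G
      refine ⟨δ', hδ'G, hδ'0, ?_⟩
      have : (1/2:ℝ)^(k+1) = (1/2)^k / 2 := by ring
      rw [this]
      linarith
  have hsmall : ∀ ε : ℝ, 0 < ε → ∃ δ, δ ∈ G ∧ 0 < tau f δ ∧ tau f δ < ε := by
    intro ε hε
    obtain ⟨k, hk⟩ := exists_pow_lt_of_lt_one hε (show (1/2:ℝ) < 1 by norm_num)
    obtain ⟨δ, hδG, hδ0, hδτ⟩ := hsmalltau k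
    exact ⟨δ, hδG, tau_pos hfree hfG hf0 hδG hδ0, lt_of_le_of_lt hδτ hk⟩
  -- the semi-conjugacy
  set S : ℝ → Set ℝ := fun x => {r | ∃ g : HomeoR, g ∈ G ∧ g 0 ≤ x ∧ r = tau f g} with hSdef
  have Sne : ∀ x, (S x).Nonempty := by
    intro x
    obtain ⟨n, hn⟩ := orbit_unbdd_below hfree hfG hf0 0 x
    exact ⟨tau f (f^(-(n:ℤ))), f^(-(n:ℤ)), G.zpow_mem hfG _, hn.le, rfl⟩
  have Sbdd : ∀ x, BddAbove (S x) := by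
    intro x
    obtain ⟨p, hp⟩ := orbit_unbdd_above hfree hfG hf0 0 x
    refine ⟨(p:ℝ), ?_⟩
    rintro r ⟨g, hgG, hg0, rfl⟩
    have : tau f g ≤ tau f (f^((p:ℕ):ℤ)) :=
      tau_le_of_le hfree hfG hf0 hgG (G.zpow_mem hfG _) (le_trans hg0 hp.le)
    rw [tau_zpow hfree hfG hf0 hfG, tau_self hfree hfG hf0] at this
    simpa using this
  set h : ℝ → ℝ := fun x => sSup (S x) with hhdef
  have hmono : Monotone h := by
    intro x y hxy
    apply csSup_le_csSup (Sbdd y) (Sne x)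
    rintro r ⟨g, hgG, hg0, rfl⟩
    exact ⟨g, hgG, le_trans hg0 hxy, rfl⟩
  have horb : ∀ g, g ∈ G → h ((g:HomeoR) 0) = tau f g := by
    intro g hg
    apply le_antisymm
    · apply csSup_le (Sne _)
      rintro r ⟨k, hkG, hk0, rfl⟩
      exact tau_le_of_le hfree hfG hf0 hkG hg hk0
    · exact le_csSup (Sbdd _) ⟨g, hg, le_refl _, rfl⟩
  have hequiv : ∀ g ∈ G, ∀ x : ℝ, h ((g:HomeoR) x) = h x + tau f g := by
    intro g hg x
    apply le_antisymm
    · apply csSup_le (Sne _)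
      rintro r ⟨k, hkG, hk0, rfl⟩
      have hk'G : g⁻¹ * k ∈ G := G.mul_mem (G.inv_mem hg) hkG
      have hk'0 : (g⁻¹ * k) 0 ≤ x := by
        show g⁻¹ (k 0) ≤ x
        have := (mono_of_mem hfree (G.inv_mem hg)).monotone hk0
        rwa [HomeoR.inv_apply_apply] at this
      have hdec : tau f (g * (g⁻¹ * k)) = tau f g + tau f (g⁻¹*k) :=
        tau_hom hfree hfG hf0 hg hk'G
      rw [show g * (g⁻¹ * k) = k by group] at hdec
      have : tau f (g⁻¹*k) ≤ h x := le_csSup (Sbdd x) ⟨g⁻¹*k, hk'G, hk'0, rfl⟩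
      linarith
    · have key : ∀ r ∈ S x, r ≤ h ((g:HomeoR) x) - tau f g := by
        rintro r ⟨k, hkG, hk0, rfl⟩
        have hmem : tau f (g*k) ∈ S (g x) := by
          refine ⟨g*k, G.mul_mem hg hkG, ?_, rfl⟩
          show g (k 0) ≤ g x
          exact (mono_of_mem hfree hg).monotone hk0
        have := le_csSup (Sbdd _) hmem
        rw [tau_hom hfree hfG hf0 hg hkG] at this
        linarith
      have := csSup_le (Sne x) key
      linarith
  have hdense : DenseRange h := by
    rw [Metric.denseRange_iff]
    intro y r hr
    obtain ⟨δ, hδG, hδ0, hδr⟩ := hsmall r hr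
    set t : ℝ := tau f δ with htdef
    set j : ℤ := ⌊y/t⌋ with hj
    refine ⟨(δ^j) 0, ?_⟩
    have ht : 0 < t := hδ0
    have hval : h ((δ^j) 0) = (j:ℝ) * t := by
      rw [horb (δ^j) (G.zpow_mem hδG j), tau_zpow hfree hfG hf0 hδG, htdef]
    rw [hval, Real.dist_eq]
    have h1 : (j:ℝ) ≤ y/t := Int.floor_le _
    have h2 : y/t < (j:ℝ) + 1 := Int.lt_floor_add_one _
    have h3 : (j:ℝ) * t ≤ y := (le_div_iff₀ ht).mp h1
    have h4 : y < ((j:ℝ)+1) * t := (div_lt_iff₀ ht).mp h2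
    rw [abs_of_nonneg (by linarith)]
    nlinarith
  have hcont : Continuous h := hmono.continuous_of_denseRange hdense
  refine ⟨h, ⟨hcont, hmono, ?_, ?_⟩, hequiv⟩
  · apply tendsto_atTop_atTop_of_monotone hmono
    intro b
    obtain ⟨n, hn⟩ := exists_nat_ge b
    refine ⟨(f^((n:ℕ):ℤ)) 0, ?_⟩
    have := horb (f^((n:ℕ):ℤ)) (G.zpow_mem hfG _)
    rw [this, tau_zpow hfree hfG hf0 hfG, tau_self hfree hfG hf0]
    simpa using hn
  · apply tendsto_atBot_atBot_of_monotone hmono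
    intro b
    obtain ⟨n, hn⟩ := exists_nat_ge (-b)
    refine ⟨(f^(-((n:ℕ):ℤ))) 0, ?_⟩
    have := horb (f^(-((n:ℕ):ℤ))) (G.zpow_mem hfG _)
    rw [this, tau_zpow hfree hfG hf0 hfG, tau_self hfree hfG hf0]
    push_cast
    linarith

end Part9

/-- **Hölder's theorem.** A group acting freely on the line is abelian and its action is
semi-conjugate to an action by translations. -/
theorem holder_theorem (G : Subgroup HomeoR)
    (hfree : ∀ g ∈ G, g ≠ 1 → ∀ x : ℝ, g x ≠ x) :
    (∀ a ∈ G, ∀ b ∈ G, a * b = b * a) ∧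
    ∃ F : Subgroup HomeoR, (∀ f ∈ F, IsTranslationHomeo f) ∧ IsSemiConjTo G F := by
  refine ⟨abelianG hfree, ?_⟩
  by_cases htriv : ∀ g ∈ G, g = (1:HomeoR)
  · -- trivial group
    refine ⟨⊥, ?_, ?_⟩
    · intro f hf
      rw [Subgroup.mem_bot] at hf
      exact ⟨0, fun x => by rw [hf]; simp⟩
    · refine ⟨1, id, ?_, ⟨continuous_id, monotone_id, tendsto_id, tendsto_id⟩, ?_⟩
      · intro b
        refine ⟨1, ?_⟩
        have hb : (b : HomeoR) = 1 := Subgroup.mem_bot.mp b.2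
        ext : 1
        simp [hb]
      · intro g x
        have hg1 : (g : HomeoR) = 1 := htriv g g.2
        simp [hg1]
  · push_neg at htriv
    obtain ⟨f0, hf0G, hf0ne⟩ := htriv
    have hf00 : f0 0 ≠ 0 := hfree f0 hf0G hf0ne 0
    -- produce a positive element f
    obtain ⟨f, hfG, hf0⟩ : ∃ f : HomeoR, f ∈ G ∧ 0 < f 0 := by
      rcases lt_or_gt_of_ne hf00 with hneg | hpos
      · refine ⟨f0⁻¹, G.inv_mem hf0G, ?_⟩
        have : f0 0 < f0 (f0⁻¹ 0) := by
          rw [HomeoR.apply_inv_apply]; exact hneg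
        exact (mono_of_mem hfree hf0G).lt_iff_lt.mp this
      · exact ⟨f0, hf0G, hpos⟩
    -- get the semi-conjugating map
    obtain ⟨h, hMP, hequiv⟩ :
        ∃ h : ℝ → ℝ, MonotoneProper h ∧
          ∀ g ∈ G, ∀ x : ℝ, h ((g:HomeoR) x) = h x + tau f g := by
      by_cases hmin : ∃ u, u ∈ G ∧ 0 < u 0 ∧ ∀ v ∈ G, 0 < v 0 → u 0 ≤ v 0
      · obtain ⟨u, huG, hu0, humin⟩ := hmin
        exact exists_h_cyclic hfree hfG hf0 huG hu0 humin
      · push_neg at hmin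
        apply exists_h_dense hfree hfG hf0
        intro v hvG hv0
        obtain ⟨w, hwG, hw1, hw2⟩ := hmin v hvG hv0
        exact ⟨w, hwG, hw1, hw2⟩
    -- the homomorphism to translations
    set Θ : ↥G →* HomeoR :=
      { toFun := fun g => Homeomorph.addRight (tau f ((g:HomeoR))),
        map_one' := by
          have : tau f ((1 : ↥G) : HomeoR) = 0 := by
            rw [OneMemClass.coe_one]
            exact tau_one hfree hfG hf0
          ext x
          show x + tau f ((1 : ↥G) : HomeoR) = x
          rw [this, add_zero],
        map_mul' := by
          intro g k
          have : tau f (((g*k : ↥G)) : HomeoR) = tau f (g:HomeoR) + tau f (k:HomeoR) := by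
            rw [Subgroup.coe_mul]
            exact tau_hom hfree hfG hf0 g.2 k.2
          ext x
          show x + tau f ((g*k : ↥G) : HomeoR) = (x + tau f (k:HomeoR)) + tau f (g:HomeoR)
          rw [this]; ring } with hΘdef
    refine ⟨Θ.range, ?_, ?_⟩
    · rintro φ ⟨g, rfl⟩
      exact ⟨tau f (g:HomeoR), fun x => rfl⟩
    · refine ⟨Θ.rangeRestrict, h, Θ.rangeRestrict_surjective, hMP, ?_⟩
      intro g x
      have hcoe : ((Θ.rangeRestrict g : ↥(Θ.range)) : HomeoR) = Θ g := rfl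
      rw [hcoe]
      show h x + tau f (g:HomeoR) = h ((g:HomeoR) x)
      exact (hequiv (g:HomeoR) g.2 x).symm
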